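/- Let u, v be complex grid functions on a 2D grid with zero boundary values, with discrete gradient ∇ₕw = (δₓ⁺w, δ_y⁺w), discrete H¹ seminorm |w|_{h,1}² = ‖δₓ⁺w‖²_{l²} + ‖δ_y⁺w‖²_{l²}, and discrete L∞ norm ‖w‖_{l∞} = max over grid points. Then ‖∇ₕ(uv)‖_{l²} ≤ √2 (‖v‖_{l∞} |u|_{h,1} + ‖u‖_{l∞} |v|_{h,1}); in particular ‖∇ₕ(uv)‖_{l²} ≤ 2(‖v‖_{l∞} |u|_{h,1} + ‖u‖_{l∞} |v|_{h,1}). -/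

import Mathlib

private lemma sqrt_add_le' (x y : ℝ) : Real.sqrt (x + y) ≤ Real.sqrt x + Real.sqrt y := by
  have hx : x ≤ Real.sqrt x ^ 2 := by
    rcases le_or_gt 0 x with h | h
    · exact (Real.sq_sqrt h).symm.le
    · exact h.le.trans (sq_nonneg _)
  have hy : y ≤ Real.sqrt y ^ 2 := by
    rcases le_or_gt 0 y with h | h
    · exact (Real.sq_sqrt h).symm.le
    · exact h.le.trans (sq_nonneg _)
  calc Real.sqrt (x + y) ≤ Real.sqrt ((Real.sqrt x + Real.sqrt y) ^ 2) := by
        apply Real.sqrt_le_sqrt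
        nlinarith [Real.sqrt_nonneg x, Real.sqrt_nonneg y]
    _ = Real.sqrt x + Real.sqrt y := Real.sqrt_sq (by positivity)

private lemma pt_bound (Cu Cv h : ℝ) (hh : 0 < h) (a a' b b' : ℂ)
    (ha : ‖a‖ ≤ Cu) (hb' : ‖b'‖ ≤ Cv) :
    ‖(a' * b' - a * b) / (h : ℂ)‖ ^ 2 ≤
      2 * Cv ^ 2 * ‖(a' - a) / (h : ℂ)‖ ^ 2
        + 2 * Cu ^ 2 * ‖(b' - b) / (h : ℂ)‖ ^ 2 := by
  have hA : ‖a' * b' - a * b‖ ≤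
      Cv * ‖a' - a‖ + Cu * ‖b' - b‖ := by
    have : a' * b' - a * b = (a' - a) * b' + a * (b' - b) := by ring
    rw [this]
    calc ‖(a' - a) * b' + a * (b' - b)‖
        ≤ ‖(a' - a) * b'‖ + ‖a * (b' - b)‖ := norm_add_le _ _
      _ = ‖a' - a‖ * ‖b'‖ + ‖a‖ * ‖b' - b‖ := by
          rw [norm_mul, norm_mul]
      _ ≤ Cv * ‖a' - a‖ + Cu * ‖b' - b‖ := by
          have := norm_nonneg (a' - a)
          have := norm_nonneg (b' - b)
          nlinarith [norm_nonneg a, norm_nonneg b']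
  have hCu0 : 0 ≤ Cu := le_trans (norm_nonneg a) ha
  have hCv0 : 0 ≤ Cv := le_trans (norm_nonneg b') hb'
  rw [norm_div, norm_div, norm_div, Complex.norm_real, Real.norm_eq_abs, abs_of_pos hh,
    div_pow, div_pow, div_pow, ← mul_div_assoc, ← mul_div_assoc, ← add_div]
  apply div_le_div_of_nonneg_right ?_ ?_ |>.trans_eq rfl
  · nlinarith [norm_nonneg (a' * b' - a * b), norm_nonneg (a' - a),
      norm_nonneg (b' - b),
      sq_nonneg (Cv * ‖a' - a‖ - Cu * ‖b' - b‖)]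
  · positivity
noncomputable def discreteH1Semi (N : ℕ) (h₁ h₂ : ℝ) (w : ℕ → ℕ → ℂ) : ℝ :=
  Real.sqrt (h₁ * h₂ *
    ((∑ j ∈ Finset.range N, ∑ k ∈ Finset.Ico 1 N,
        ‖(w (j + 1) k - w j k) / (h₁ : ℂ)‖ ^ 2) +
     ∑ j ∈ Finset.Ico 1 N, ∑ k ∈ Finset.range N,
        ‖(w j (k + 1) - w j k) / (h₂ : ℂ)‖ ^ 2))

set_option maxHeartbeats 1000000 in
theorem stmt10 (N : ℕ) (hN : 2 ≤ N) (h₁ h₂ : ℝ) (hh₁ : 0 < h₁) (hh₂ : 0 < h₂)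
    (u v : ℕ → ℕ → ℂ)
    (hbu : ∀ j k : ℕ, j ≤ N → k ≤ N → (j = 0 ∨ j = N ∨ k = 0 ∨ k = N) → u j k = 0)
    (hbv : ∀ j k : ℕ, j ≤ N → k ≤ N → (j = 0 ∨ j = N ∨ k = 0 ∨ k = N) → v j k = 0)
    (Cu Cv : ℝ)
    (hCu : ∀ j k : ℕ, j ≤ N → k ≤ N → ‖u j k‖ ≤ Cu)
    (hCv : ∀ j k : ℕ, j ≤ N → k ≤ N → ‖v j k‖ ≤ Cv) :
    discreteH1Semi N h₁ h₂ (fun j k => u j k * v j k)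
        ≤ Real.sqrt 2 * (Cv * discreteH1Semi N h₁ h₂ u + Cu * discreteH1Semi N h₁ h₂ v) ∧
    discreteH1Semi N h₁ h₂ (fun j k => u j k * v j k)
        ≤ 2 * (Cv * discreteH1Semi N h₁ h₂ u + Cu * discreteH1Semi N h₁ h₂ v) := by
  have hCu0 : 0 ≤ Cu := le_trans (norm_nonneg _) (hCu 0 0 (Nat.zero_le N) (Nat.zero_le N))
  have hCv0 : 0 ≤ Cv := le_trans (norm_nonneg _) (hCv 0 0 (Nat.zero_le N) (Nat.zero_le N))
  have hx : (∑ j ∈ Finset.range N, ∑ k ∈ Finset.Ico 1 N,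
        ‖(u (j + 1) k * v (j + 1) k - u j k * v j k) / (h₁ : ℂ)‖ ^ 2)
      ≤ 2 * Cv ^ 2 * (∑ j ∈ Finset.range N, ∑ k ∈ Finset.Ico 1 N,
          ‖(u (j + 1) k - u j k) / (h₁ : ℂ)‖ ^ 2)
        + 2 * Cu ^ 2 * (∑ j ∈ Finset.range N, ∑ k ∈ Finset.Ico 1 N,
          ‖(v (j + 1) k - v j k) / (h₁ : ℂ)‖ ^ 2) := by
    have h : (∑ j ∈ Finset.range N, ∑ k ∈ Finset.Ico 1 N,
          ‖(u (j + 1) k * v (j + 1) k - u j k * v j k) / (h₁ : ℂ)‖ ^ 2)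
        ≤ ∑ j ∈ Finset.range N, ∑ k ∈ Finset.Ico 1 N,
            (2 * Cv ^ 2 * ‖(u (j + 1) k - u j k) / (h₁ : ℂ)‖ ^ 2
              + 2 * Cu ^ 2 * ‖(v (j + 1) k - v j k) / (h₁ : ℂ)‖ ^ 2) := by
      refine Finset.sum_le_sum fun j hj => Finset.sum_le_sum fun k hk => ?_
      exact pt_bound Cu Cv h₁ hh₁ (u j k) (u (j + 1) k) (v j k) (v (j + 1) k)
        (hCu j k (le_of_lt (Finset.mem_range.mp hj)) (le_of_lt (Finset.mem_Ico.mp hk).2))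
        (hCv (j + 1) k (Finset.mem_range.mp hj) (le_of_lt (Finset.mem_Ico.mp hk).2))
    simpa [Finset.sum_add_distrib, ← Finset.mul_sum] using h
  have hy : (∑ j ∈ Finset.Ico 1 N, ∑ k ∈ Finset.range N,
        ‖(u j (k + 1) * v j (k + 1) - u j k * v j k) / (h₂ : ℂ)‖ ^ 2)
      ≤ 2 * Cv ^ 2 * (∑ j ∈ Finset.Ico 1 N, ∑ k ∈ Finset.range N,
          ‖(u j (k + 1) - u j k) / (h₂ : ℂ)‖ ^ 2)
        + 2 * Cu ^ 2 * (∑ j ∈ Finset.Ico 1 N, ∑ k ∈ Finset.range N,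
          ‖(v j (k + 1) - v j k) / (h₂ : ℂ)‖ ^ 2) := by
    have h : (∑ j ∈ Finset.Ico 1 N, ∑ k ∈ Finset.range N,
          ‖(u j (k + 1) * v j (k + 1) - u j k * v j k) / (h₂ : ℂ)‖ ^ 2)
        ≤ ∑ j ∈ Finset.Ico 1 N, ∑ k ∈ Finset.range N,
            (2 * Cv ^ 2 * ‖(u j (k + 1) - u j k) / (h₂ : ℂ)‖ ^ 2
              + 2 * Cu ^ 2 * ‖(v j (k + 1) - v j k) / (h₂ : ℂ)‖ ^ 2) := by
      refine Finset.sum_le_sum fun j hj => Finset.sum_le_sum fun k hk => ?_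
      exact pt_bound Cu Cv h₂ hh₂ (u j k) (u j (k + 1)) (v j k) (v j (k + 1))
        (hCu j k (le_of_lt (Finset.mem_Ico.mp hj).2) (le_of_lt (Finset.mem_range.mp hk)))
        (hCv j (k + 1) (le_of_lt (Finset.mem_Ico.mp hj).2) (Finset.mem_range.mp hk))
    simpa [Finset.sum_add_distrib, ← Finset.mul_sum] using h
  unfold discreteH1Semi
  set Sxuv := ∑ j ∈ Finset.range N, ∑ k ∈ Finset.Ico 1 N,
      ‖(u (j + 1) k * v (j + 1) k - u j k * v j k) / (h₁ : ℂ)‖ ^ 2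
  set Syuv := ∑ j ∈ Finset.Ico 1 N, ∑ k ∈ Finset.range N,
      ‖(u j (k + 1) * v j (k + 1) - u j k * v j k) / (h₂ : ℂ)‖ ^ 2
  set Sxu := ∑ j ∈ Finset.range N, ∑ k ∈ Finset.Ico 1 N,
      ‖(u (j + 1) k - u j k) / (h₁ : ℂ)‖ ^ 2 with hSxu
  set Syu := ∑ j ∈ Finset.Ico 1 N, ∑ k ∈ Finset.range N,
      ‖(u j (k + 1) - u j k) / (h₂ : ℂ)‖ ^ 2 with hSyu
  set Sxv := ∑ j ∈ Finset.range N, ∑ k ∈ Finset.Ico 1 N,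
      ‖(v (j + 1) k - v j k) / (h₁ : ℂ)‖ ^ 2 with hSxv
  set Syv := ∑ j ∈ Finset.Ico 1 N, ∑ k ∈ Finset.range N,
      ‖(v j (k + 1) - v j k) / (h₂ : ℂ)‖ ^ 2 with hSyv
  have hSxu0 : 0 ≤ Sxu := by rw [hSxu]; positivity
  have hSyu0 : 0 ≤ Syu := by rw [hSyu]; positivity
  have hSxv0 : 0 ≤ Sxv := by rw [hSxv]; positivity
  have hSyv0 : 0 ≤ Syv := by rw [hSyv]; positivity
  have key : Real.sqrt (h₁ * h₂ * (Sxuv + Syuv))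
      ≤ Real.sqrt 2 * (Cv * Real.sqrt (h₁ * h₂ * (Sxu + Syu))
          + Cu * Real.sqrt (h₁ * h₂ * (Sxv + Syv))) := by
    calc Real.sqrt (h₁ * h₂ * (Sxuv + Syuv))
        ≤ Real.sqrt (2 * (Cv ^ 2 * (h₁ * h₂ * (Sxu + Syu))
            + Cu ^ 2 * (h₁ * h₂ * (Sxv + Syv)))) := by
          apply Real.sqrt_le_sqrt
          nlinarith [mul_pos hh₁ hh₂]
      _ = Real.sqrt 2 * Real.sqrt (Cv ^ 2 * (h₁ * h₂ * (Sxu + Syu))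
            + Cu ^ 2 * (h₁ * h₂ * (Sxv + Syv))) := by
          rw [Real.sqrt_mul (by norm_num)]
      _ ≤ Real.sqrt 2 * (Real.sqrt (Cv ^ 2 * (h₁ * h₂ * (Sxu + Syu)))
            + Real.sqrt (Cu ^ 2 * (h₁ * h₂ * (Sxv + Syv)))) :=
          mul_le_mul_of_nonneg_left (sqrt_add_le' _ _) (Real.sqrt_nonneg 2)
      _ = Real.sqrt 2 * (Cv * Real.sqrt (h₁ * h₂ * (Sxu + Syu))
            + Cu * Real.sqrt (h₁ * h₂ * (Sxv + Syv))) := by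
          rw [Real.sqrt_mul (sq_nonneg Cv), Real.sqrt_mul (sq_nonneg Cu),
            Real.sqrt_sq hCv0, Real.sqrt_sq hCu0]
  refine ⟨key, key.trans ?_⟩
  have h2 : Real.sqrt 2 ≤ 2 := by
    nlinarith [Real.sq_sqrt (by norm_num : (0:ℝ) ≤ 2), Real.sqrt_nonneg 2]
  apply mul_le_mul_of_nonneg_right h2
  have h3 := Real.sqrt_nonneg (h₁ * h₂ * (Sxu + Syu))
  have h4 := Real.sqrt_nonneg (h₁ * h₂ * (Sxv + Syv))
  positivity
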